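/- There exists a complete bounded lattice L of cardinality ℵ_ω such that for every n ∈ ℕ, L contains an antichain of cardinality ℵ_n, yet every antichain in L has cardinality strictly less than ℵ_ω, every chain in L is at most countable, and there are 2^{ℵ_ω} many monotone functions from L to L. -/

import Mathlib

open Cardinal

namespace AlephLat

abbrev A (n : ℕ) : Type := (Cardinal.aleph n).out

inductive L : Type where
  | node : ℕ → L
  | pt : (n : ℕ) → A n → L
  | top : L

namespace L

def ht : L → ℕ∞
  | node n => ((2 * n : ℕ) : ℕ∞)
  | pt n _ => ((2 * n + 1 : ℕ) : ℕ∞)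
  | top => ⊤

lemma ht_lt_top : ∀ {a : L}, a ≠ top → ht a < ⊤ := by
  intro a h
  cases a with
  | node n => exact WithTop.coe_lt_top _
  | pt n x => exact WithTop.coe_lt_top _
  | top => exact absurd rfl h

lemma ht_top_iff {a : L} : ht a = ⊤ ↔ a = top := by
  refine ⟨fun h => ?_, fun h => by subst h; rfl⟩
  by_contra hne
  exact absurd h (ht_lt_top hne).ne

lemma ht_eq_cases {a b : L} (h : ht a = ht b) :
    a = b ∨ ∃ n x y, a = pt n x ∧ b = pt n y := by
  cases a with
  | node m =>
    cases b with
    | node n =>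
      simp only [ht, Nat.cast_inj] at h
      have : m = n := by omega
      subst this; exact Or.inl rfl
    | pt n y => simp only [ht, Nat.cast_inj] at h; omega
    | top => exact Or.inl (ht_top_iff.mp h)
  | pt m x =>
    cases b with
    | node n => simp only [ht, Nat.cast_inj] at h; omega
    | pt n y =>
      simp only [ht, Nat.cast_inj] at h
      have : m = n := by omega
      subst this
      exact Or.inr ⟨m, x, y, rfl, rfl⟩
    | top => exact Or.inl (ht_top_iff.mp h)
  | top =>
    cases b with
    | node n => exact Or.inl (ht_top_iff.mp h.symm).symm
    | pt n y => exact Or.inl (ht_top_iff.mp h.symm).symm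
    | top => exact Or.inl rfl

instance : PartialOrder L where
  le a b := a = b ∨ ht a < ht b
  le_refl a := Or.inl rfl
  le_trans a b c hab hbc := by
    rcases hab with rfl | h1
    · exact hbc
    · rcases hbc with rfl | h2
      · exact Or.inr h1
      · exact Or.inr (h1.trans h2)
  le_antisymm a b hab hba := by
    rcases hab with rfl | h1
    · rfl
    · rcases hba with rfl | h2
      · rfl
      · exact absurd (h1.trans h2) (lt_irrefl _)

lemma le_def {a b : L} : a ≤ b ↔ a = b ∨ ht a < ht b := Iff.rfl

lemma le_top' (a : L) : a ≤ top := by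
  by_cases h : a = top
  · exact Or.inl h
  · exact Or.inr (by rw [show ht top = ⊤ from rfl]; exact ht_lt_top h)

lemma ht_ne_top_exists {b : L} (hb : b ≠ top) : ∃ j : ℕ, ht b = (j : ℕ∞) := by
  cases b with
  | node n => exact ⟨2 * n, rfl⟩
  | pt n x => exact ⟨2 * n + 1, rfl⟩
  | top => exact absurd rfl hb

open Classical in
noncomputable def inf0 (s : Set L) : L :=
  if h : ∃ a ∈ s, ∀ b ∈ s, a ≤ b then h.choose
  else if h2 : ∃ k : ℕ, ∃ a ∈ s, ht a = (k : ℕ∞) then L.node (Nat.find h2 / 2)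
  else L.top

noncomputable instance : InfSet L := ⟨inf0⟩

open Classical in
lemma isGLB_inf0 (s : Set L) : IsGLB s (inf0 s) := by
  unfold inf0
  split_ifs with h h2
  · obtain ⟨ha, hle⟩ := h.choose_spec
    exact ⟨fun b hb => hle b hb, fun b hb => hb ha⟩
  · -- no least element, but some finite-height element
    set k := Nat.find h2 with hk
    obtain ⟨a, has, hta⟩ := Nat.find_spec h2
    have hmin : ∀ b ∈ s, (k : ℕ∞) ≤ ht b := by
      intro b hb
      by_cases hbt : b = top
      · subst hbt; exact le_top
      · obtain ⟨j, hj⟩ := ht_ne_top_exists hbt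
        rw [hj, Nat.cast_le]
        exact Nat.find_min' h2 ⟨b, hb, hj⟩
    have hodd : k % 2 = 1 := by
      by_contra hev
      have hev' : k = 2 * (k / 2) := by omega
      set m := k / 2 with hm
      have haeq : a = L.node m := by
        have : ht (L.node m) = ht a := by
          rw [hta, ← hk, hev']; rfl
        rcases ht_eq_cases this with heq | ⟨n, x, y, hx, _⟩
        · exact heq.symm
        · exact absurd hx (by simp)
      -- a = node m is a least element, contradiction
      refine h ⟨a, has, fun b hb => ?_⟩
      rcases lt_or_eq_of_le (hmin b hb) with hlt | heq
      · exact Or.inr (by rw [hta]; exact hlt)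
      · rcases ht_eq_cases (show ht a = ht b by rw [hta, ← heq]) with heq2 | ⟨n, x, y, hx, _⟩
        · exact Or.inl heq2
        · rw [haeq] at hx; exact absurd hx (by simp)
    set m := k / 2 with hm
    have hk2 : k = 2 * m + 1 := by omega
    constructor
    · intro b hb
      refine Or.inr ?_
      have h1 : ht (L.node m) = ((2 * m : ℕ) : ℕ∞) := rfl
      have h2' : ((2 * m : ℕ) : ℕ∞) < (k : ℕ∞) := by
        rw [Nat.cast_lt]; omega
      exact lt_of_lt_of_le (h1 ▸ h2') (hmin b hb)
    · intro b hb
      -- b is a lower bound; find a second element at height k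
      push_neg at h
      obtain ⟨c, hcs, hca⟩ := h a has
      have hcht : ht c = (k : ℕ∞) := by
        have h1 : ht c ≤ (k : ℕ∞) := by
          by_contra hgt
          push_neg at hgt
          exact hca (Or.inr (by rw [hta]; exact hgt))
        exact le_antisymm h1 (hmin c hcs)
      have hac : a ≠ c := fun he => hca (he ▸ le_refl a)
      have hba : b ≤ a := hb has
      have hbc : b ≤ c := hb hcs
      have hbne : b ≠ a := by
        rintro rfl
        rcases hbc with rfl | hlt
        · exact hac rfl
        · rw [hta, hcht] at hlt; exact lt_irrefl _ hlt
      have hblt : ht b < (k : ℕ∞) := by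
        rcases hba with rfl | hlt
        · exact absurd rfl hbne
        · rwa [hta] at hlt
      have hbnt : b ≠ top := by
        intro he
        rw [he, show ht L.top = ⊤ from rfl] at hblt
        exact absurd hblt (not_top_lt)
      obtain ⟨j, hj⟩ := ht_ne_top_exists hbnt
      rw [hj, Nat.cast_lt] at hblt
      rcases Nat.lt_or_ge j (2 * m) with hlt | hge
      · exact Or.inr (by rw [hj, show ht (L.node m) = ((2 * m : ℕ) : ℕ∞) from rfl, Nat.cast_lt]; exact hlt)
      · have hjm : j = 2 * m := by omega
        have : ht b = ht (L.node m) := by rw [hj, hjm]; rfl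
        rcases ht_eq_cases this with heq | ⟨n, x, y, _, hy⟩
        · exact Or.inl heq
        · exact absurd hy (by simp)
  · -- s has no finite-height element and no least: s = ∅
    have hs : s = ∅ := by
      by_contra hne
      obtain ⟨a, ha⟩ := Set.nonempty_iff_ne_empty.mpr hne
      have hat : a = top := by
        by_contra hant
        exact h2 (let ⟨j, hj⟩ := ht_ne_top_exists hant; ⟨j, a, ha, hj⟩)
      subst hat
      refine h ⟨L.top, ha, fun b hb => ?_⟩
      have hbt : b = L.top := by
        by_contra hbnt
        exact h2 (let ⟨j, hj⟩ := ht_ne_top_exists hbnt; ⟨j, b, hb, hj⟩)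
      exact hbt ▸ le_refl _
    constructor
    · intro x hx; rw [hs] at hx; exact absurd hx (Set.notMem_empty x)
    · intro b _; exact le_top' b

noncomputable instance : CompleteLattice L :=
  completeLatticeOfInf L isGLB_inf0

lemma iSup_aleph : ⨆ n : ℕ, (Cardinal.aleph (n : Ordinal) : Cardinal.{0}) = Cardinal.aleph Ordinal.omega0 := by
  apply le_antisymm
  · exact ciSup_le' fun n => aleph_le_aleph.mpr (Ordinal.nat_lt_omega0 n).le
  · rw [aleph_limit Ordinal.isSuccLimit_omega0]
    refine ciSup_le' fun a => ?_
    obtain ⟨n, hn⟩ := Ordinal.lt_omega0.mp a.2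
    rw [hn]
    exact le_ciSup (Cardinal.bddAbove_range _) n

lemma sum_aleph : Cardinal.sum (fun n : ℕ => (Cardinal.aleph (n : Ordinal) : Cardinal.{0})) =
    Cardinal.aleph Ordinal.omega0 := by
  apply le_antisymm
  · have h := Cardinal.sum_le_mk_mul_iSup (fun n : ℕ => Cardinal.aleph (n : Ordinal))
    rwa [Cardinal.mk_eq_aleph0 ℕ, iSup_aleph, aleph0_mul_eq (aleph0_le_aleph _)] at h
  · rw [← iSup_aleph]
    exact ciSup_le' fun n => Cardinal.le_sum _ n

lemma pt_injective (n : ℕ) : Function.Injective (L.pt n) := by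
  intro x y h
  injection h

def toOpt : L → Option (ℕ ⊕ Σ n : ℕ, A n)
  | L.node n => some (Sum.inl n)
  | L.pt n x => some (Sum.inr ⟨n, x⟩)
  | L.top => none

lemma toOpt_injective : Function.Injective toOpt := by
  intro a b h
  cases a <;> cases b <;> simp [toOpt] at h ⊢
  · exact h
  · exact ⟨h.1, h.2⟩

lemma mk_L : #L = Cardinal.aleph Ordinal.omega0 := by
  apply le_antisymm
  · have h1 : #L ≤ #(Option (ℕ ⊕ Σ n : ℕ, A n)) :=
      Cardinal.mk_le_of_injective toOpt_injective
    rw [Cardinal.mk_option, Cardinal.mk_sum, Cardinal.lift_id, Cardinal.lift_id,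
      Cardinal.mk_sigma] at h1
    simp only [Cardinal.mk_out] at h1
    rw [sum_aleph, Cardinal.mk_eq_aleph0 ℕ] at h1
    refine h1.trans ?_
    refine Cardinal.add_le_of_le (aleph0_le_aleph _) (Cardinal.add_le_of_le (aleph0_le_aleph _)
      (aleph0_le_aleph _) le_rfl) (le_trans (le_of_lt Cardinal.one_lt_aleph0)
      (aleph0_le_aleph _))
  · rw [← iSup_aleph]
    refine ciSup_le' fun n => ?_
    calc Cardinal.aleph (n : Ordinal) = #(A n) := (Cardinal.mk_out _).symm
      _ ≤ #L := Cardinal.mk_le_of_injective (pt_injective n)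

lemma ht_pt (n : ℕ) (x : A n) : ht (L.pt n x) = ((2 * n + 1 : ℕ) : ℕ∞) := rfl

lemma isAntichain_level (n : ℕ) : IsAntichain (· ≤ ·) (Set.range (L.pt n)) := by
  rintro x ⟨a, rfl⟩ y ⟨b, rfl⟩ hne hle
  rcases hle with heq | hlt
  · exact hne heq
  · rw [ht_pt, ht_pt] at hlt; exact lt_irrefl _ hlt

lemma incomp_ht_eq {x y : L} (hxy : ¬ x ≤ y) (hyx : ¬ y ≤ x) : ht x = ht y := by
  have h1 : ¬ ht x < ht y := fun h => hxy (Or.inr h)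
  have h2 : ¬ ht y < ht x := fun h => hyx (Or.inr h)
  exact le_antisymm (not_lt.mp h2) (not_lt.mp h1)

lemma antichain_small (S : Set L) (hS : IsAntichain (· ≤ ·) S) :
    Cardinal.mk S < Cardinal.aleph Ordinal.omega0 := by
  by_cases hsub : S.Subsingleton
  · exact lt_of_le_of_lt hsub.cardinalMk_le_one
      (lt_of_lt_of_le Cardinal.one_lt_aleph0 (aleph0_le_aleph _))
  · rw [Set.not_subsingleton_iff] at hsub
    obtain ⟨x, hx, y, hy, hne⟩ := hsub
    have hxy := hS hx hy hne
    have hyx := hS hy hx hne.symm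
    have hht := incomp_ht_eq hxy hyx
    rcases ht_eq_cases hht with heq | ⟨n, a, b, hxe, hye⟩
    · exact absurd heq hne
    have hsubset : S ⊆ Set.range (L.pt n) := by
      intro z hz
      by_cases hzx : z = x
      · exact hzx ▸ (hxe ▸ Set.mem_range_self a)
      · have h1 := hS hz hx hzx
        have h2 := hS hx hz (Ne.symm hzx)
        have hz2 := incomp_ht_eq h1 h2
        rw [hxe] at hz2
        rcases ht_eq_cases hz2 with heq | ⟨m, u, v, hze, hpe⟩
        · exact heq ▸ Set.mem_range_self a
        · injection hpe with hmn _
          subst hmn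
          exact hze ▸ Set.mem_range_self u
    calc #S ≤ #(Set.range (L.pt n)) := Cardinal.mk_le_mk_of_subset hsubset
      _ = #(A n) := Cardinal.mk_range_eq _ (pt_injective n)
      _ = Cardinal.aleph (n : Ordinal) := Cardinal.mk_out _
      _ < Cardinal.aleph Ordinal.omega0 := aleph_lt_aleph.mpr (Ordinal.nat_lt_omega0 n)

lemma chain_countable (C : Set L) (hC : IsChain (· ≤ ·) C) : C.Countable := by
  have hinj : Function.Injective (fun z : C => ht z.1) := by
    intro x y h
    simp only [] at h
    replace h : ht x.1 = ht y.1 := h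
    by_cases hxy : (x : L) = (y : L)
    · exact Subtype.ext hxy
    rcases hC x.2 y.2 hxy with hle | hle
    · rcases hle with heq | hlt
      · exact Subtype.ext heq
      · rw [h] at hlt; exact absurd hlt (lt_irrefl _)
    · rcases hle with heq | hlt
      · exact Subtype.ext heq.symm
      · rw [h] at hlt; exact absurd hlt (lt_irrefl _)
  have : Countable C := hinj.countable
  exact Set.countable_coe_iff.mp this

def F (g : ∀ n, A n → A n) : L → L
  | L.node n => L.node n
  | L.pt n x => L.pt n (g n x)
  | L.top => L.top

lemma ht_F (g : ∀ n, A n → A n) (a : L) : ht (F g a) = ht a := by cases a <;> rfl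

lemma F_mono (g : ∀ n, A n → A n) : Monotone (F g) := by
  intro a b hab
  rcases hab with rfl | hlt
  · exact le_refl _
  · exact Or.inr (by rw [ht_F, ht_F]; exact hlt)

lemma mk_monotone : #{f : L → L // Monotone f} = 2 ^ Cardinal.aleph Ordinal.omega0 := by
  apply le_antisymm
  · calc #{f : L → L // Monotone f} ≤ #(L → L) := Cardinal.mk_subtype_le _
      _ = #L ^ #L := (Cardinal.power_def L L).symm
      _ = 2 ^ #L := Cardinal.power_self_eq (by rw [mk_L]; exact aleph0_le_aleph _)
      _ = 2 ^ Cardinal.aleph Ordinal.omega0 := by rw [mk_L]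
  · have hinj : Function.Injective
        (fun g : (∀ n, A n → A n) => (⟨F g, F_mono g⟩ : {f : L → L // Monotone f})) := by
      intro g g' h
      simp only [Subtype.mk.injEq] at h
      funext n x
      have h2 : F g (L.pt n x) = F g' (L.pt n x) := congrFun h (L.pt n x)
      exact pt_injective n h2
    have h1 : #(∀ n, A n → A n) ≤ #{f : L → L // Monotone f} :=
      Cardinal.mk_le_of_injective hinj
    have h2 : #(∀ n, A n → A n) = 2 ^ Cardinal.aleph Ordinal.omega0 := by
      rw [Cardinal.mk_pi]
      have he : (fun n : ℕ => #(A n → A n)) =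
          fun n : ℕ => (2 : Cardinal) ^ (Cardinal.aleph (n : Ordinal) : Cardinal.{0}) := by
        funext n
        rw [← Cardinal.power_def, Cardinal.mk_out]
        exact Cardinal.power_self_eq (aleph0_le_aleph _)
      rw [he, ← Cardinal.power_sum, sum_aleph]
    rw [h2] at h1
    exact h1

end L

end AlephLat


/-- There is a complete (bounded) lattice `L` of cardinality `ℵ_ω` which contains antichains
of cardinality `ℵ_n` for each `n`, but all of whose antichains have cardinality `< ℵ_ω` and
all of whose chains are at most countable, and which admits `2^{ℵ_ω}` many monotone
functions `L → L`. -/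
theorem exists_lattice_aleph_omega_antichains :
    ∃ (L : Type) (_ : CompleteLattice L),
      Cardinal.mk L = Cardinal.aleph Ordinal.omega0 ∧
      (∀ n : ℕ, ∃ A : Set L, IsAntichain (· ≤ ·) A ∧ Cardinal.mk A = Cardinal.aleph n) ∧
      (∀ A : Set L, IsAntichain (· ≤ ·) A → Cardinal.mk A < Cardinal.aleph Ordinal.omega0) ∧
      (∀ C : Set L, IsChain (· ≤ ·) C → C.Countable) ∧
      Cardinal.mk {f : L → L // Monotone f} = 2 ^ Cardinal.aleph Ordinal.omega0 := by
  refine ⟨AlephLat.L, inferInstance, AlephLat.L.mk_L, fun n => ?_,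
    AlephLat.L.antichain_small, AlephLat.L.chain_countable, AlephLat.L.mk_monotone⟩
  refine ⟨Set.range (AlephLat.L.pt n), AlephLat.L.isAntichain_level n, ?_⟩
  rw [Cardinal.mk_range_eq _ (AlephLat.L.pt_injective n)]
  exact Cardinal.mk_out _
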